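/- Let η ∈ {+1, −1} and let x, y, h₁, h₂ > 0 be such that b := −η·(y/(h₁x))^{1/3} + η·(x/(h₂y))^{1/3} > 0, and set f(x, y, h₁, h₂) = b^{3/2}. Then: (i) ∂f/∂x = (η/2)·b^{1/2}·( (y/(h₁x⁴))^{1/3} + (h₂x²y)^{−1/3} ); (ii) ∂²f/∂x² = (1/12)·b^{−1/2}·( 9y^{2/3}/(h₁^{2/3}x^{8/3}) − 2/((h₁h₂)^{1/3}x²) − 3/(h₂^{2/3}x^{4/3}y^{2/3}) ); (iii) ∂²f/∂x∂y = −(1/12)·b^{−1/2}·( 3/(h₁²x⁵y)^{1/3} + 3/(h₂²xy⁵)^{1/3} − 2/((h₁h₂)^{1/3}xy) ); (iv) ∂³f/∂x²∂y = (η/72)·b^{−3/2}·( 9/(h₂xy²) + 43/(h₁^{2/3}h₂^{1/3}x^{7/3}y^{2/3}) − 17/(h₁^{1/3}h₂^{2/3}x^{5/3}y^{4/3}) − 27/(h₁x³) ). -/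

import Mathlib

/-- The model phase function
`f(x, y, h₁, h₂) = (−η(y/(h₁x))^{1/3} + η(x/(h₂y))^{1/3})^{3/2}`. -/
noncomputable def fPhase (η h₁ h₂ x y : ℝ) : ℝ :=
  (-η * (y / (h₁ * x)) ^ ((1 : ℝ) / 3) + η * (x / (h₂ * y)) ^ ((1 : ℝ) / 3)) ^ ((3 : ℝ) / 2)

open Real Filter

section Helpers
variable {z : ℝ}

theorem pow_rpow' (hz : 0 ≤ z) (n : ℕ) (e : ℝ) : (z ^ n) ^ e = (z ^ e) ^ n := by
  rw [← Real.rpow_natCast z n, ← Real.rpow_mul hz, mul_comm, Real.rpow_mul hz,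
    Real.rpow_natCast]

theorem r13n (hz : 0 ≤ z) : z ^ (-(1:ℝ)/3) = (z ^ ((1:ℝ)/3))⁻¹ := by
  rw [show (-(1:ℝ)/3) = -((1:ℝ)/3) by norm_num, Real.rpow_neg hz]

theorem rthird (hz : 0 ≤ z) (n : ℕ) : z ^ ((n:ℝ)/3) = (z ^ ((1:ℝ)/3)) ^ n := by
  rw [← Real.rpow_natCast (z ^ ((1:ℝ)/3)) n, ← Real.rpow_mul hz]; congr 1; ring

theorem r23 (hz : 0 ≤ z) : z ^ ((2:ℝ)/3) = (z ^ ((1:ℝ)/3)) ^ (2:ℕ) := by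
  have := rthird hz 2; norm_num at this ⊢; exact this

theorem r43 (hz : 0 ≤ z) : z ^ ((4:ℝ)/3) = (z ^ ((1:ℝ)/3)) ^ (4:ℕ) := by
  have := rthird hz 4; norm_num at this ⊢; exact this

theorem r43n (hz : 0 ≤ z) : z ^ (-(4:ℝ)/3) = ((z ^ ((1:ℝ)/3)) ^ (4:ℕ))⁻¹ := by
  rw [show (-(4:ℝ)/3) = -((4:ℝ)/3) by norm_num, Real.rpow_neg hz, r43 hz]

theorem r23n (hz : 0 ≤ z) : z ^ (-(2:ℝ)/3) = ((z ^ ((1:ℝ)/3)) ^ (2:ℕ))⁻¹ := by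
  rw [show (-(2:ℝ)/3) = -((2:ℝ)/3) by norm_num, Real.rpow_neg hz, r23 hz]

theorem r53 (hz : 0 ≤ z) : z ^ ((5:ℝ)/3) = (z ^ ((1:ℝ)/3)) ^ (5:ℕ) := by
  have := rthird hz 5; norm_num at this ⊢; exact this

theorem r73 (hz : 0 ≤ z) : z ^ ((7:ℝ)/3) = (z ^ ((1:ℝ)/3)) ^ (7:ℕ) := by
  have := rthird hz 7; norm_num at this ⊢; exact this

theorem r83 (hz : 0 ≤ z) : z ^ ((8:ℝ)/3) = (z ^ ((1:ℝ)/3)) ^ (8:ℕ) := by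
  have := rthird hz 8; norm_num at this ⊢; exact this

theorem cube_root_cube (hz : 0 ≤ z) : (z ^ ((1:ℝ)/3)) ^ (3:ℕ) = z := by
  rw [← rthird hz 3]; norm_num

theorem r12n (hz : 0 ≤ z) : z ^ (-(1:ℝ)/2) = (z ^ ((1:ℝ)/2))⁻¹ := by
  rw [show (-(1:ℝ)/2) = -((1:ℝ)/2) by norm_num, Real.rpow_neg hz]

theorem rhalf (hz : 0 ≤ z) (n : ℕ) : z ^ ((n:ℝ)/2) = (z ^ ((1:ℝ)/2)) ^ n := by
  rw [← Real.rpow_natCast (z ^ ((1:ℝ)/2)) n, ← Real.rpow_mul hz]; congr 1; ring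

theorem r32 (hz : 0 ≤ z) : z ^ ((3:ℝ)/2) = (z ^ ((1:ℝ)/2)) ^ (3:ℕ) := by
  have := rhalf hz 3; norm_num at this ⊢; exact this

theorem r32n (hz : 0 ≤ z) : z ^ (-(3:ℝ)/2) = ((z ^ ((1:ℝ)/2)) ^ (3:ℕ))⁻¹ := by
  rw [show (-(3:ℝ)/2) = -((3:ℝ)/2) by norm_num, Real.rpow_neg hz, r32 hz]

theorem sqrt_sq' (hz : 0 ≤ z) : (z ^ ((1:ℝ)/2)) ^ (2:ℕ) = z := by
  rw [← rhalf hz 2]; norm_num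

end Helpers

-- quick test of atomize style
example (x y h₁ : ℝ) (hx : 0 < x) (hy : 0 < y) (hh₁ : 0 < h₁) :
    (y/(h₁*x^4))^((1:ℝ)/3) = (y/h₁)^((1:ℝ)/3) * x^(-(4:ℝ)/3) := by
  simp (disch := positivity) only [Real.div_rpow, Real.mul_rpow, pow_rpow', r13n, r43n, r43, r23]
  field_simp
noncomputable def bb (η h₁ h₂ s t : ℝ) : ℝ :=
  -η * (t / (h₁ * s)) ^ ((1 : ℝ) / 3) + η * (s / (h₂ * t)) ^ ((1 : ℝ) / 3)

theorem bb_eq_mono {η h₁ h₂ t : ℝ} (hh₁ : 0 < h₁) (hh₂ : 0 < h₂) (ht : 0 < t)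
    {s : ℝ} (hs : 0 < s) :
    bb η h₁ h₂ s t
      = (-η * (t/h₁) ^ ((1:ℝ)/3)) * s ^ (-(1:ℝ)/3)
        + (η * (h₂*t) ^ (-(1:ℝ)/3)) * s ^ ((1:ℝ)/3) := by
  unfold bb
  simp (disch := positivity) only [Real.div_rpow, Real.mul_rpow, r13n]
  field_simp

theorem hasDerivAt_bb {η h₁ h₂ t : ℝ} (hh₁ : 0 < h₁) (hh₂ : 0 < h₂) (ht : 0 < t)
    {s : ℝ} (hs : 0 < s) :
    HasDerivAt (fun s' => bb η h₁ h₂ s' t)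
      (η/3 * ((t/(h₁*s^4)) ^ ((1:ℝ)/3) + (h₂*s^2*t) ^ (-(1:ℝ)/3))) s := by
  have d1 : HasDerivAt (fun u : ℝ => u ^ (-(1:ℝ)/3)) (-(1:ℝ)/3 * s ^ (-(1:ℝ)/3 - 1)) s :=
    Real.hasDerivAt_rpow_const (Or.inl hs.ne')
  have d2 : HasDerivAt (fun u : ℝ => u ^ ((1:ℝ)/3)) ((1:ℝ)/3 * s ^ ((1:ℝ)/3 - 1)) s :=
    Real.hasDerivAt_rpow_const (Or.inl hs.ne')
  have D := (d1.const_mul (-η * (t/h₁) ^ ((1:ℝ)/3))).add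
      (d2.const_mul (η * (h₂*t) ^ (-(1:ℝ)/3)))
  have heq : (fun s' => (-η * (t/h₁) ^ ((1:ℝ)/3)) * s' ^ (-(1:ℝ)/3)
        + (η * (h₂*t) ^ (-(1:ℝ)/3)) * s' ^ ((1:ℝ)/3))
      =ᶠ[nhds s] (fun s' => bb η h₁ h₂ s' t) := by
    filter_upwards [eventually_gt_nhds hs] with s' hs'
    exact (bb_eq_mono hh₁ hh₂ ht hs').symm
  refine (D.congr_of_eventuallyEq heq.symm).congr_deriv ?_
  rw [Real.rpow_sub hs, Real.rpow_sub hs, Real.rpow_one]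
  simp (disch := positivity) only [Real.div_rpow, Real.mul_rpow, pow_rpow', r13n, r43n, r43, r23]
  field_simp
  set U := s ^ ((1:ℝ)/3) with hU
  set V := t ^ ((1:ℝ)/3) with hV
  set P := h₁ ^ ((1:ℝ)/3) with hP
  set Q := h₂ ^ ((1:ℝ)/3) with hQ
  have hU3 : U^(3:ℕ) = s := by rw [hU]; exact cube_root_cube hs.le
  have hV3 : V^(3:ℕ) = t := by rw [hV]; exact cube_root_cube ht.le
  have hP3 : P^(3:ℕ) = h₁ := by rw [hP]; exact cube_root_cube hh₁.le
  have hQ3 : Q^(3:ℕ) = h₂ := by rw [hQ]; exact cube_root_cube hh₂.le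
  simp only [← hU3, ← hV3, ← hP3, ← hQ3]
theorem bb_atom {η h₁ h₂ s t : ℝ} (hh₁ : 0 < h₁) (hh₂ : 0 < h₂) (hs : 0 < s) (ht : 0 < t) :
    bb η h₁ h₂ s t
      = -η * (t ^ ((1:ℝ)/3) / (h₁ ^ ((1:ℝ)/3) * s ^ ((1:ℝ)/3)))
        + η * (s ^ ((1:ℝ)/3) / (h₂ ^ ((1:ℝ)/3) * t ^ ((1:ℝ)/3))) := by
  unfold bb
  simp (disch := positivity) only [Real.div_rpow, Real.mul_rpow]

theorem hasDerivAt_bb_t {η h₁ h₂ s : ℝ} (hh₁ : 0 < h₁) (hh₂ : 0 < h₂) (hs : 0 < s)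
    {t : ℝ} (ht : 0 < t) :
    HasDerivAt (fun t' => bb η h₁ h₂ s t')
      (-η/3 * ((s/(h₂*t^4)) ^ ((1:ℝ)/3) + (h₁*t^2*s) ^ (-(1:ℝ)/3))) t := by
  have d1 : HasDerivAt (fun u : ℝ => u ^ ((1:ℝ)/3)) ((1:ℝ)/3 * t ^ ((1:ℝ)/3 - 1)) t :=
    Real.hasDerivAt_rpow_const (Or.inl ht.ne')
  have d2 : HasDerivAt (fun u : ℝ => u ^ (-(1:ℝ)/3)) (-(1:ℝ)/3 * t ^ (-(1:ℝ)/3 - 1)) t :=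
    Real.hasDerivAt_rpow_const (Or.inl ht.ne')
  have D := (d1.const_mul (-η * (h₁*s) ^ (-(1:ℝ)/3))).add
      (d2.const_mul (η * (s/h₂) ^ ((1:ℝ)/3)))
  have heq : (fun t' => (-η * (h₁*s) ^ (-(1:ℝ)/3)) * t' ^ ((1:ℝ)/3)
        + (η * (s/h₂) ^ ((1:ℝ)/3)) * t' ^ (-(1:ℝ)/3))
      =ᶠ[nhds t] (fun t' => bb η h₁ h₂ s t') := by
    filter_upwards [eventually_gt_nhds ht] with t' ht'
    rw [bb_atom hh₁ hh₂ hs ht']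
    simp (disch := positivity) only [Real.div_rpow, Real.mul_rpow, r13n]
    field_simp
  have D2 := D.congr_of_eventuallyEq heq.symm
  have hval : (-η * (h₁*s) ^ (-(1:ℝ)/3)) * ((1:ℝ)/3 * t ^ ((1:ℝ)/3 - 1))
        + (η * (s/h₂) ^ ((1:ℝ)/3)) * (-(1:ℝ)/3 * t ^ (-(1:ℝ)/3 - 1))
      = -η/3 * ((s/(h₂*t^4)) ^ ((1:ℝ)/3) + (h₁*t^2*s) ^ (-(1:ℝ)/3)) := by
    rw [Real.rpow_sub ht, Real.rpow_sub ht, Real.rpow_one]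
    simp (disch := positivity) only [Real.div_rpow, Real.mul_rpow, pow_rpow', r13n, r43n, r43,
      r23, r23n]
    field_simp
    set U := s ^ ((1:ℝ)/3) with hU
    set V := t ^ ((1:ℝ)/3) with hV
    set P := h₁ ^ ((1:ℝ)/3) with hP
    set Q := h₂ ^ ((1:ℝ)/3) with hQ
    have hU3 : U^(3:ℕ) = s := by rw [hU]; exact cube_root_cube hs.le
    have hV3 : V^(3:ℕ) = t := by rw [hV]; exact cube_root_cube ht.le
    have hP3 : P^(3:ℕ) = h₁ := by rw [hP]; exact cube_root_cube hh₁.le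
    have hQ3 : Q^(3:ℕ) = h₂ := by rw [hQ]; exact cube_root_cube hh₂.le
    simp only [← hU3, ← hV3, ← hP3, ← hQ3]
    ring
  rwa [hval] at D2
theorem fPhase_eq_bb (η h₁ h₂ s t : ℝ) :
    fPhase η h₁ h₂ s t = bb η h₁ h₂ s t ^ ((3:ℝ)/2) := rfl

theorem hasDerivAt_f {η h₁ h₂ t : ℝ} (hh₁ : 0 < h₁) (hh₂ : 0 < h₂) (ht : 0 < t)
    {s : ℝ} (hs : 0 < s) (hβ : 0 < bb η h₁ h₂ s t) :
    HasDerivAt (fun s' => fPhase η h₁ h₂ s' t)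
      (η/2 * (bb η h₁ h₂ s t) ^ ((1:ℝ)/2)
        * ((t/(h₁*s^4)) ^ ((1:ℝ)/3) + (h₂*s^2*t) ^ (-(1:ℝ)/3))) s := by
  have hdb := hasDerivAt_bb (η := η) hh₁ hh₂ ht hs
  have hr : HasDerivAt (fun u : ℝ => u ^ ((3:ℝ)/2))
      ((3:ℝ)/2 * (bb η h₁ h₂ s t) ^ ((3:ℝ)/2 - 1)) (bb η h₁ h₂ s t) :=
    Real.hasDerivAt_rpow_const (Or.inl hβ.ne')
  have D : HasDerivAt (fun s' => fPhase η h₁ h₂ s' t)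
      (((3:ℝ)/2 * (bb η h₁ h₂ s t) ^ ((3:ℝ)/2 - 1))
        * (η/3 * ((t/(h₁*s^4)) ^ ((1:ℝ)/3) + (h₂*s^2*t) ^ (-(1:ℝ)/3)))) s := by exact hr.comp s hdb
  have hval : ((3:ℝ)/2 * (bb η h₁ h₂ s t) ^ ((3:ℝ)/2 - 1))
        * (η/3 * ((t/(h₁*s^4)) ^ ((1:ℝ)/3) + (h₂*s^2*t) ^ (-(1:ℝ)/3)))
      = η/2 * (bb η h₁ h₂ s t) ^ ((1:ℝ)/2)
        * ((t/(h₁*s^4)) ^ ((1:ℝ)/3) + (h₂*s^2*t) ^ (-(1:ℝ)/3)) := by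
    rw [show (bb η h₁ h₂ s t) ^ ((3:ℝ)/2 - 1) = (bb η h₁ h₂ s t) ^ ((1:ℝ)/2) by
      congr 1; norm_num]
    ring
  rwa [hval] at D
theorem M_split {h₁ h₂ t : ℝ} (hh₁ : 0 < h₁) (hh₂ : 0 < h₂) (ht : 0 < t)
    {s : ℝ} (hs : 0 < s) :
    (t/(h₁*s^4)) ^ ((1:ℝ)/3) + (h₂*s^2*t) ^ (-(1:ℝ)/3)
      = (t/h₁) ^ ((1:ℝ)/3) * s ^ (-(4:ℝ)/3) + (h₂*t) ^ (-(1:ℝ)/3) * s ^ (-(2:ℝ)/3) := by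
  simp (disch := positivity) only [Real.div_rpow, Real.mul_rpow, pow_rpow', r13n, r43n, r23n]
  field_simp

theorem hasDerivAt_G1_s {η h₁ h₂ t : ℝ} (hη : η = 1 ∨ η = -1)
    (hh₁ : 0 < h₁) (hh₂ : 0 < h₂) (ht : 0 < t)
    {s : ℝ} (hs : 0 < s) (hβ : 0 < bb η h₁ h₂ s t) :
    HasDerivAt (fun s' => η/2 * (bb η h₁ h₂ s' t) ^ ((1:ℝ)/2)
        * ((t/(h₁*s'^4)) ^ ((1:ℝ)/3) + (h₂*s'^2*t) ^ (-(1:ℝ)/3)))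
      (1/12 * (bb η h₁ h₂ s t) ^ (-(1:ℝ)/2) *
        (9 * t ^ ((2:ℝ)/3) / (h₁ ^ ((2:ℝ)/3) * s ^ ((8:ℝ)/3))
          - 2 / ((h₁*h₂) ^ ((1:ℝ)/3) * s ^ 2)
          - 3 / (h₂ ^ ((2:ℝ)/3) * s ^ ((4:ℝ)/3) * t ^ ((2:ℝ)/3)))) s := by
  have hdb := hasDerivAt_bb (η := η) hh₁ hh₂ ht hs
  have hr : HasDerivAt (fun u : ℝ => u ^ ((1:ℝ)/2))
      ((1:ℝ)/2 * (bb η h₁ h₂ s t) ^ ((1:ℝ)/2 - 1)) (bb η h₁ h₂ s t) :=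
    Real.hasDerivAt_rpow_const (Or.inl hβ.ne')
  have hw : HasDerivAt (fun s' => (bb η h₁ h₂ s' t) ^ ((1:ℝ)/2))
      (((1:ℝ)/2 * (bb η h₁ h₂ s t) ^ ((1:ℝ)/2 - 1))
        * (η/3 * ((t/(h₁*s^4)) ^ ((1:ℝ)/3) + (h₂*s^2*t) ^ (-(1:ℝ)/3)))) s := by exact hr.comp s hdb
  have d43 : HasDerivAt (fun u : ℝ => u ^ (-(4:ℝ)/3)) (-(4:ℝ)/3 * s ^ (-(4:ℝ)/3 - 1)) s :=
    Real.hasDerivAt_rpow_const (Or.inl hs.ne')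
  have d23 : HasDerivAt (fun u : ℝ => u ^ (-(2:ℝ)/3)) (-(2:ℝ)/3 * s ^ (-(2:ℝ)/3 - 1)) s :=
    Real.hasDerivAt_rpow_const (Or.inl hs.ne')
  have hM := (d43.const_mul ((t/h₁) ^ ((1:ℝ)/3))).add (d23.const_mul ((h₂*t) ^ (-(1:ℝ)/3)))
  have DF := (hw.const_mul (η/2)).mul hM
  have heq : (fun s' => η/2 * (bb η h₁ h₂ s' t) ^ ((1:ℝ)/2)
        * ((t/(h₁*s'^4)) ^ ((1:ℝ)/3) + (h₂*s'^2*t) ^ (-(1:ℝ)/3)))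
      =ᶠ[nhds s] (fun s' => (η/2 * (bb η h₁ h₂ s' t) ^ ((1:ℝ)/2))
        * ((t/h₁) ^ ((1:ℝ)/3) * s' ^ (-(4:ℝ)/3) + (h₂*t) ^ (-(1:ℝ)/3) * s' ^ (-(2:ℝ)/3))) := by
    filter_upwards [eventually_gt_nhds hs] with s' hs'
    rw [← M_split hh₁ hh₂ ht hs']
  have D2 := DF.congr_of_eventuallyEq heq
  have hval : (η/2 * (((1:ℝ)/2 * (bb η h₁ h₂ s t) ^ ((1:ℝ)/2 - 1))
          * (η/3 * ((t/(h₁*s^4)) ^ ((1:ℝ)/3) + (h₂*s^2*t) ^ (-(1:ℝ)/3)))))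
          * ((t/h₁) ^ ((1:ℝ)/3) * s ^ (-(4:ℝ)/3) + (h₂*t) ^ (-(1:ℝ)/3) * s ^ (-(2:ℝ)/3))
        + (η/2 * (bb η h₁ h₂ s t) ^ ((1:ℝ)/2))
          * ((t/h₁) ^ ((1:ℝ)/3) * (-(4:ℝ)/3 * s ^ (-(4:ℝ)/3 - 1))
            + (h₂*t) ^ (-(1:ℝ)/3) * (-(2:ℝ)/3 * s ^ (-(2:ℝ)/3 - 1)))
      = 1/12 * (bb η h₁ h₂ s t) ^ (-(1:ℝ)/2) *
        (9 * t ^ ((2:ℝ)/3) / (h₁ ^ ((2:ℝ)/3) * s ^ ((8:ℝ)/3))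
          - 2 / ((h₁*h₂) ^ ((1:ℝ)/3) * s ^ 2)
          - 3 / (h₂ ^ ((2:ℝ)/3) * s ^ ((4:ℝ)/3) * t ^ ((2:ℝ)/3))) := by
    rw [show (bb η h₁ h₂ s t) ^ ((1:ℝ)/2 - 1) = (bb η h₁ h₂ s t) ^ (-(1:ℝ)/2) by
        congr 1; norm_num,
      show (bb η h₁ h₂ s t) ^ ((1:ℝ)/2)
          = (bb η h₁ h₂ s t) ^ (-(1:ℝ)/2) * bb η h₁ h₂ s t by
        rw [← Real.rpow_add_one hβ.ne']; congr 1; norm_num,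
      bb_atom hh₁ hh₂ hs ht]
    rw [Real.rpow_sub hs, Real.rpow_sub hs, Real.rpow_one]
    simp (disch := positivity) only [Real.div_rpow, Real.mul_rpow, pow_rpow', r13n, r43n, r23n,
      r23, r43, r83]
    set U := s ^ ((1:ℝ)/3) with hU
    set V := t ^ ((1:ℝ)/3) with hV
    set P := h₁ ^ ((1:ℝ)/3) with hP
    set Q := h₂ ^ ((1:ℝ)/3) with hQ
    have hU3 : U^(3:ℕ) = s := by rw [hU]; exact cube_root_cube hs.le
    have hV3 : V^(3:ℕ) = t := by rw [hV]; exact cube_root_cube ht.le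
    have hP3 : P^(3:ℕ) = h₁ := by rw [hP]; exact cube_root_cube hh₁.le
    have hQ3 : Q^(3:ℕ) = h₂ := by rw [hQ]; exact cube_root_cube hh₂.le
    have hU0 : 0 < U := by rw [hU]; positivity
    have hV0 : 0 < V := by rw [hV]; positivity
    have hP0 : 0 < P := by rw [hP]; positivity
    have hQ0 : 0 < Q := by rw [hQ]; positivity
    simp only [← hU3, ← hV3, ← hP3, ← hQ3]
    rcases hη with rfl | rfl <;> field_simp <;> ring
  simp only [Pi.add_apply, Pi.sub_apply] at D2
  rwa [hval] at D2
theorem M_split_t {h₁ h₂ s : ℝ} (hh₁ : 0 < h₁) (hh₂ : 0 < h₂) (hs : 0 < s)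
    {t' : ℝ} (ht' : 0 < t') :
    (t'/(h₁*s^4)) ^ ((1:ℝ)/3) + (h₂*s^2*t') ^ (-(1:ℝ)/3)
      = (h₁*s^4) ^ (-(1:ℝ)/3) * t' ^ ((1:ℝ)/3) + (h₂*s^2) ^ (-(1:ℝ)/3) * t' ^ (-(1:ℝ)/3) := by
  simp (disch := positivity) only [Real.div_rpow, Real.mul_rpow, pow_rpow', r13n, r43n, r23n]
  field_simp

theorem hasDerivAt_G1_t {η h₁ h₂ s : ℝ} (hη : η = 1 ∨ η = -1)
    (hh₁ : 0 < h₁) (hh₂ : 0 < h₂) (hs : 0 < s)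
    {t : ℝ} (ht : 0 < t) (hβ : 0 < bb η h₁ h₂ s t) :
    HasDerivAt (fun t' => η/2 * (bb η h₁ h₂ s t') ^ ((1:ℝ)/2)
        * ((t'/(h₁*s^4)) ^ ((1:ℝ)/3) + (h₂*s^2*t') ^ (-(1:ℝ)/3)))
      (-(1/12) * (bb η h₁ h₂ s t) ^ (-(1:ℝ)/2) *
        (3 / (h₁^2*s^5*t) ^ ((1:ℝ)/3) + 3 / (h₂^2*s*t^5) ^ ((1:ℝ)/3)
          - 2 / ((h₁*h₂) ^ ((1:ℝ)/3) * s * t))) t := by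
  have hdb := hasDerivAt_bb_t (η := η) hh₁ hh₂ hs ht
  have hr : HasDerivAt (fun u : ℝ => u ^ ((1:ℝ)/2))
      ((1:ℝ)/2 * (bb η h₁ h₂ s t) ^ ((1:ℝ)/2 - 1)) (bb η h₁ h₂ s t) :=
    Real.hasDerivAt_rpow_const (Or.inl hβ.ne')
  have hw : HasDerivAt (fun t' => (bb η h₁ h₂ s t') ^ ((1:ℝ)/2))
      (((1:ℝ)/2 * (bb η h₁ h₂ s t) ^ ((1:ℝ)/2 - 1))
        * (-η/3 * ((s/(h₂*t^4)) ^ ((1:ℝ)/3) + (h₁*t^2*s) ^ (-(1:ℝ)/3)))) t := hr.comp t hdb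
  have d13 : HasDerivAt (fun u : ℝ => u ^ ((1:ℝ)/3)) ((1:ℝ)/3 * t ^ ((1:ℝ)/3 - 1)) t :=
    Real.hasDerivAt_rpow_const (Or.inl ht.ne')
  have d13n : HasDerivAt (fun u : ℝ => u ^ (-(1:ℝ)/3)) (-(1:ℝ)/3 * t ^ (-(1:ℝ)/3 - 1)) t :=
    Real.hasDerivAt_rpow_const (Or.inl ht.ne')
  have hM := (d13.const_mul ((h₁*s^4) ^ (-(1:ℝ)/3))).add (d13n.const_mul ((h₂*s^2) ^ (-(1:ℝ)/3)))
  have DF := (hw.const_mul (η/2)).mul hM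
  have heq : (fun t' => η/2 * (bb η h₁ h₂ s t') ^ ((1:ℝ)/2)
        * ((t'/(h₁*s^4)) ^ ((1:ℝ)/3) + (h₂*s^2*t') ^ (-(1:ℝ)/3)))
      =ᶠ[nhds t] (fun t' => (η/2 * (bb η h₁ h₂ s t') ^ ((1:ℝ)/2))
        * ((h₁*s^4) ^ (-(1:ℝ)/3) * t' ^ ((1:ℝ)/3) + (h₂*s^2) ^ (-(1:ℝ)/3) * t' ^ (-(1:ℝ)/3))) := by
    filter_upwards [eventually_gt_nhds ht] with t' ht'
    rw [← M_split_t hh₁ hh₂ hs ht']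
  have D2 := DF.congr_of_eventuallyEq heq
  have hval : (η/2 * (((1:ℝ)/2 * (bb η h₁ h₂ s t) ^ ((1:ℝ)/2 - 1))
          * (-η/3 * ((s/(h₂*t^4)) ^ ((1:ℝ)/3) + (h₁*t^2*s) ^ (-(1:ℝ)/3)))))
          * ((h₁*s^4) ^ (-(1:ℝ)/3) * t ^ ((1:ℝ)/3) + (h₂*s^2) ^ (-(1:ℝ)/3) * t ^ (-(1:ℝ)/3))
        + (η/2 * (bb η h₁ h₂ s t) ^ ((1:ℝ)/2))
          * ((h₁*s^4) ^ (-(1:ℝ)/3) * ((1:ℝ)/3 * t ^ ((1:ℝ)/3 - 1))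
            + (h₂*s^2) ^ (-(1:ℝ)/3) * (-(1:ℝ)/3 * t ^ (-(1:ℝ)/3 - 1)))
      = -(1/12) * (bb η h₁ h₂ s t) ^ (-(1:ℝ)/2) *
        (3 / (h₁^2*s^5*t) ^ ((1:ℝ)/3) + 3 / (h₂^2*s*t^5) ^ ((1:ℝ)/3)
          - 2 / ((h₁*h₂) ^ ((1:ℝ)/3) * s * t)) := by
    rw [show (bb η h₁ h₂ s t) ^ ((1:ℝ)/2 - 1) = (bb η h₁ h₂ s t) ^ (-(1:ℝ)/2) by
        congr 1; norm_num,
      show (bb η h₁ h₂ s t) ^ ((1:ℝ)/2)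
          = (bb η h₁ h₂ s t) ^ (-(1:ℝ)/2) * bb η h₁ h₂ s t by
        rw [← Real.rpow_add_one hβ.ne']; congr 1; norm_num,
      bb_atom hh₁ hh₂ hs ht]
    rw [Real.rpow_sub ht, Real.rpow_sub ht, Real.rpow_one]
    simp (disch := positivity) only [Real.div_rpow, Real.mul_rpow, pow_rpow', r13n, r43n, r23n,
      r23, r43, r83]
    set U := s ^ ((1:ℝ)/3) with hU
    set V := t ^ ((1:ℝ)/3) with hV
    set P := h₁ ^ ((1:ℝ)/3) with hP
    set Q := h₂ ^ ((1:ℝ)/3) with hQ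
    have hU3 : U^(3:ℕ) = s := by rw [hU]; exact cube_root_cube hs.le
    have hV3 : V^(3:ℕ) = t := by rw [hV]; exact cube_root_cube ht.le
    have hP3 : P^(3:ℕ) = h₁ := by rw [hP]; exact cube_root_cube hh₁.le
    have hQ3 : Q^(3:ℕ) = h₂ := by rw [hQ]; exact cube_root_cube hh₂.le
    have hU0 : 0 < U := by rw [hU]; positivity
    have hV0 : 0 < V := by rw [hV]; positivity
    have hP0 : 0 < P := by rw [hP]; positivity
    have hQ0 : 0 < Q := by rw [hQ]; positivity
    simp only [← hU3, ← hV3, ← hP3, ← hQ3]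
    rcases hη with rfl | rfl <;> field_simp <;> ring
  simp only [Pi.add_apply, Pi.sub_apply] at D2
  rwa [hval] at D2
theorem N_split_t {h₁ h₂ s : ℝ} {t' : ℝ} (ht' : 0 < t') :
    9 * t' ^ ((2:ℝ)/3) / (h₁ ^ ((2:ℝ)/3) * s ^ ((8:ℝ)/3))
        - 2 / ((h₁*h₂) ^ ((1:ℝ)/3) * s ^ 2)
        - 3 / (h₂ ^ ((2:ℝ)/3) * s ^ ((4:ℝ)/3) * t' ^ ((2:ℝ)/3))
      = (9 / (h₁ ^ ((2:ℝ)/3) * s ^ ((8:ℝ)/3))) * t' ^ ((2:ℝ)/3)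
        - 2 / ((h₁*h₂) ^ ((1:ℝ)/3) * s ^ 2)
        - (3 / (h₂ ^ ((2:ℝ)/3) * s ^ ((4:ℝ)/3))) * t' ^ (-(2:ℝ)/3) := by
  rw [r23n ht'.le, r23 ht'.le]
  have h0 : ((t' ^ ((1:ℝ)/3)) ^ (2:ℕ) : ℝ) ≠ 0 := by positivity
  field_simp

theorem hasDerivAt_G2_t {η h₁ h₂ s : ℝ} (hη : η = 1 ∨ η = -1)
    (hh₁ : 0 < h₁) (hh₂ : 0 < h₂) (hs : 0 < s)
    {t : ℝ} (ht : 0 < t) (hβ : 0 < bb η h₁ h₂ s t) :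
    HasDerivAt (fun t' => 1/12 * (bb η h₁ h₂ s t') ^ (-(1:ℝ)/2) *
        (9 * t' ^ ((2:ℝ)/3) / (h₁ ^ ((2:ℝ)/3) * s ^ ((8:ℝ)/3))
          - 2 / ((h₁*h₂) ^ ((1:ℝ)/3) * s ^ 2)
          - 3 / (h₂ ^ ((2:ℝ)/3) * s ^ ((4:ℝ)/3) * t' ^ ((2:ℝ)/3))))
      (η/72 * (bb η h₁ h₂ s t) ^ (-(3:ℝ)/2) *
        (9 / (h₂*s*t^2)
          + 43 / (h₁ ^ ((2:ℝ)/3) * h₂ ^ ((1:ℝ)/3) * s ^ ((7:ℝ)/3) * t ^ ((2:ℝ)/3))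
          - 17 / (h₁ ^ ((1:ℝ)/3) * h₂ ^ ((2:ℝ)/3) * s ^ ((5:ℝ)/3) * t ^ ((4:ℝ)/3))
          - 27 / (h₁*s^3))) t := by
  have hdb := hasDerivAt_bb_t (η := η) hh₁ hh₂ hs ht
  have hr : HasDerivAt (fun u : ℝ => u ^ (-(1:ℝ)/2))
      (-(1:ℝ)/2 * (bb η h₁ h₂ s t) ^ (-(1:ℝ)/2 - 1)) (bb η h₁ h₂ s t) :=
    Real.hasDerivAt_rpow_const (Or.inl hβ.ne')
  have hw : HasDerivAt (fun t' => (bb η h₁ h₂ s t') ^ (-(1:ℝ)/2))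
      ((-(1:ℝ)/2 * (bb η h₁ h₂ s t) ^ (-(1:ℝ)/2 - 1))
        * (-η/3 * ((s/(h₂*t^4)) ^ ((1:ℝ)/3) + (h₁*t^2*s) ^ (-(1:ℝ)/3)))) t := hr.comp t hdb
  have d23 : HasDerivAt (fun u : ℝ => u ^ ((2:ℝ)/3)) ((2:ℝ)/3 * t ^ ((2:ℝ)/3 - 1)) t :=
    Real.hasDerivAt_rpow_const (Or.inl ht.ne')
  have d23n : HasDerivAt (fun u : ℝ => u ^ (-(2:ℝ)/3)) (-(2:ℝ)/3 * t ^ (-(2:ℝ)/3 - 1)) t :=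
    Real.hasDerivAt_rpow_const (Or.inl ht.ne')
  have hN := ((d23.const_mul (9 / (h₁ ^ ((2:ℝ)/3) * s ^ ((8:ℝ)/3)))).sub_const
      (2 / ((h₁*h₂) ^ ((1:ℝ)/3) * s ^ 2))).sub
      (d23n.const_mul (3 / (h₂ ^ ((2:ℝ)/3) * s ^ ((4:ℝ)/3))))
  have DF := (hw.const_mul ((1:ℝ)/12)).mul hN
  have heq : (fun t' => 1/12 * (bb η h₁ h₂ s t') ^ (-(1:ℝ)/2) *
        (9 * t' ^ ((2:ℝ)/3) / (h₁ ^ ((2:ℝ)/3) * s ^ ((8:ℝ)/3))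
          - 2 / ((h₁*h₂) ^ ((1:ℝ)/3) * s ^ 2)
          - 3 / (h₂ ^ ((2:ℝ)/3) * s ^ ((4:ℝ)/3) * t' ^ ((2:ℝ)/3))))
      =ᶠ[nhds t] (fun t' => ((1:ℝ)/12 * (bb η h₁ h₂ s t') ^ (-(1:ℝ)/2)) *
        ((9 / (h₁ ^ ((2:ℝ)/3) * s ^ ((8:ℝ)/3))) * t' ^ ((2:ℝ)/3)
          - 2 / ((h₁*h₂) ^ ((1:ℝ)/3) * s ^ 2)
          - (3 / (h₂ ^ ((2:ℝ)/3) * s ^ ((4:ℝ)/3))) * t' ^ (-(2:ℝ)/3))) := by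
    filter_upwards [eventually_gt_nhds ht] with t' ht'
    rw [← N_split_t ht']
  have D2 := DF.congr_of_eventuallyEq heq
  have hval : ((1:ℝ)/12 * ((-(1:ℝ)/2 * (bb η h₁ h₂ s t) ^ (-(1:ℝ)/2 - 1))
          * (-η/3 * ((s/(h₂*t^4)) ^ ((1:ℝ)/3) + (h₁*t^2*s) ^ (-(1:ℝ)/3)))))
          * ((9 / (h₁ ^ ((2:ℝ)/3) * s ^ ((8:ℝ)/3))) * t ^ ((2:ℝ)/3)
            - 2 / ((h₁*h₂) ^ ((1:ℝ)/3) * s ^ 2)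
            - (3 / (h₂ ^ ((2:ℝ)/3) * s ^ ((4:ℝ)/3))) * t ^ (-(2:ℝ)/3))
        + ((1:ℝ)/12 * (bb η h₁ h₂ s t) ^ (-(1:ℝ)/2)) *
          ((9 / (h₁ ^ ((2:ℝ)/3) * s ^ ((8:ℝ)/3))) * ((2:ℝ)/3 * t ^ ((2:ℝ)/3 - 1))
            - (3 / (h₂ ^ ((2:ℝ)/3) * s ^ ((4:ℝ)/3))) * (-(2:ℝ)/3 * t ^ (-(2:ℝ)/3 - 1)))
      = η/72 * (bb η h₁ h₂ s t) ^ (-(3:ℝ)/2) *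
        (9 / (h₂*s*t^2)
          + 43 / (h₁ ^ ((2:ℝ)/3) * h₂ ^ ((1:ℝ)/3) * s ^ ((7:ℝ)/3) * t ^ ((2:ℝ)/3))
          - 17 / (h₁ ^ ((1:ℝ)/3) * h₂ ^ ((2:ℝ)/3) * s ^ ((5:ℝ)/3) * t ^ ((4:ℝ)/3))
          - 27 / (h₁*s^3)) := by
    rw [show (bb η h₁ h₂ s t) ^ (-(1:ℝ)/2 - 1) = (bb η h₁ h₂ s t) ^ (-(3:ℝ)/2) by
        congr 1; norm_num,
      show (bb η h₁ h₂ s t) ^ (-(1:ℝ)/2)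
          = (bb η h₁ h₂ s t) ^ (-(3:ℝ)/2) * bb η h₁ h₂ s t by
        rw [← Real.rpow_add_one hβ.ne']; congr 1; norm_num,
      bb_atom hh₁ hh₂ hs ht]
    rw [Real.rpow_sub ht, Real.rpow_sub ht, Real.rpow_one]
    simp (disch := positivity) only [Real.div_rpow, Real.mul_rpow, pow_rpow', r13n, r43n, r23n,
      r23, r43, r53, r73, r83]
    set U := s ^ ((1:ℝ)/3) with hU
    set V := t ^ ((1:ℝ)/3) with hV
    set P := h₁ ^ ((1:ℝ)/3) with hP
    set Q := h₂ ^ ((1:ℝ)/3) with hQ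
    have hU3 : U^(3:ℕ) = s := by rw [hU]; exact cube_root_cube hs.le
    have hV3 : V^(3:ℕ) = t := by rw [hV]; exact cube_root_cube ht.le
    have hP3 : P^(3:ℕ) = h₁ := by rw [hP]; exact cube_root_cube hh₁.le
    have hQ3 : Q^(3:ℕ) = h₂ := by rw [hQ]; exact cube_root_cube hh₂.le
    have hU0 : 0 < U := by rw [hU]; positivity
    have hV0 : 0 < V := by rw [hV]; positivity
    have hP0 : 0 < P := by rw [hP]; positivity
    have hQ0 : 0 < Q := by rw [hQ]; positivity
    simp only [← hU3, ← hV3, ← hP3, ← hQ3]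
    rcases hη with rfl | rfl <;> field_simp <;> ring
  simp only [Pi.add_apply, Pi.sub_apply] at D2
  rwa [hval] at D2
theorem contAt_bb_s {η h₁ h₂ t : ℝ} (hh₁ : 0 < h₁) (hh₂ : 0 < h₂) (ht : 0 < t)
    {s : ℝ} (hs : 0 < s) : ContinuousAt (fun s' => bb η h₁ h₂ s' t) s := by
  unfold bb
  apply ContinuousAt.add
  · exact continuousAt_const.mul
      ((continuousAt_const.div ((continuous_const.mul continuous_id).continuousAt)
        (by exact (mul_pos hh₁ hs).ne')).rpow_const (Or.inr (by norm_num)))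
  · exact continuousAt_const.mul
      (((continuous_id.div_const (h₂*t)).continuousAt).rpow_const (Or.inr (by norm_num)))

theorem contAt_bb_t {η h₁ h₂ s : ℝ} (hh₁ : 0 < h₁) (hh₂ : 0 < h₂) (hs : 0 < s)
    {t : ℝ} (ht : 0 < t) : ContinuousAt (fun t' => bb η h₁ h₂ s t') t := by
  unfold bb
  apply ContinuousAt.add
  · exact continuousAt_const.mul
      (((continuous_id.div_const (h₁*s)).continuousAt).rpow_const (Or.inr (by norm_num)))
  · exact continuousAt_const.mul
      ((continuousAt_const.div ((continuous_const.mul continuous_id).continuousAt)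
        (by exact (mul_pos hh₂ ht).ne')).rpow_const (Or.inr (by norm_num)))

theorem ev_s {η h₁ h₂ t : ℝ} (hh₁ : 0 < h₁) (hh₂ : 0 < h₂) (ht : 0 < t)
    {s : ℝ} (hs : 0 < s) (hβ : 0 < bb η h₁ h₂ s t) :
    ∀ᶠ s' in nhds s, 0 < s' ∧ 0 < bb η h₁ h₂ s' t := by
  filter_upwards [eventually_gt_nhds hs,
    (contAt_bb_s (η := η) hh₁ hh₂ ht hs).eventually (eventually_gt_nhds hβ)] with s' h1 h2
  exact ⟨h1, h2⟩

theorem ev_t {η h₁ h₂ s : ℝ} (hh₁ : 0 < h₁) (hh₂ : 0 < h₂) (hs : 0 < s)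
    {t : ℝ} (ht : 0 < t) (hβ : 0 < bb η h₁ h₂ s t) :
    ∀ᶠ t' in nhds t, 0 < t' ∧ 0 < bb η h₁ h₂ s t' := by
  filter_upwards [eventually_gt_nhds ht,
    (contAt_bb_t (η := η) hh₁ hh₂ hs ht).eventually (eventually_gt_nhds hβ)] with t' h1 h2
  exact ⟨h1, h2⟩

theorem iterated2_eq {η h₁ h₂ t : ℝ} (hη : η = 1 ∨ η = -1)
    (hh₁ : 0 < h₁) (hh₂ : 0 < h₂) (ht : 0 < t)
    {s : ℝ} (hs : 0 < s) (hβ : 0 < bb η h₁ h₂ s t) :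
    iteratedDeriv 2 (fun s' : ℝ => fPhase η h₁ h₂ s' t) s
      = 1/12 * (bb η h₁ h₂ s t) ^ (-(1:ℝ)/2) *
        (9 * t ^ ((2:ℝ)/3) / (h₁ ^ ((2:ℝ)/3) * s ^ ((8:ℝ)/3))
          - 2 / ((h₁*h₂) ^ ((1:ℝ)/3) * s ^ 2)
          - 3 / (h₂ ^ ((2:ℝ)/3) * s ^ ((4:ℝ)/3) * t ^ ((2:ℝ)/3))) := by
  rw [iteratedDeriv_succ, iteratedDeriv_one]
  have hev : deriv (fun s' : ℝ => fPhase η h₁ h₂ s' t)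
      =ᶠ[nhds s] (fun s' => η/2 * (bb η h₁ h₂ s' t) ^ ((1:ℝ)/2)
        * ((t/(h₁*s'^4)) ^ ((1:ℝ)/3) + (h₂*s'^2*t) ^ (-(1:ℝ)/3))) := by
    filter_upwards [ev_s hh₁ hh₂ ht hs hβ] with s' hs'
    exact (hasDerivAt_f hh₁ hh₂ ht hs'.1 hs'.2).deriv
  rw [hev.deriv_eq]
  exact (hasDerivAt_G1_s hη hh₁ hh₂ ht hs hβ).deriv

/-- First, second and third partial derivatives of the model phase function
arising from the cube-root phases of GL(3) Voronoi summation. -/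
theorem fPhase_derivs (η : ℝ) (hη : η = 1 ∨ η = -1)
    (x y h₁ h₂ : ℝ) (hx : 0 < x) (hy : 0 < y) (hh₁ : 0 < h₁) (hh₂ : 0 < h₂)
    (hb : 0 < -η * (y / (h₁ * x)) ^ ((1 : ℝ) / 3) + η * (x / (h₂ * y)) ^ ((1 : ℝ) / 3)) :
    (deriv (fun s : ℝ => fPhase η h₁ h₂ s y) x
        = η / 2 *
          (-η * (y / (h₁ * x)) ^ ((1 : ℝ) / 3)
            + η * (x / (h₂ * y)) ^ ((1 : ℝ) / 3)) ^ ((1 : ℝ) / 2) *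
          ((y / (h₁ * x ^ 4)) ^ ((1 : ℝ) / 3) + (h₂ * x ^ 2 * y) ^ (-(1 : ℝ) / 3))) ∧
    (iteratedDeriv 2 (fun s : ℝ => fPhase η h₁ h₂ s y) x
        = 1 / 12 *
          (-η * (y / (h₁ * x)) ^ ((1 : ℝ) / 3)
            + η * (x / (h₂ * y)) ^ ((1 : ℝ) / 3)) ^ (-(1 : ℝ) / 2) *
          (9 * y ^ ((2 : ℝ) / 3) / (h₁ ^ ((2 : ℝ) / 3) * x ^ ((8 : ℝ) / 3))
            - 2 / ((h₁ * h₂) ^ ((1 : ℝ) / 3) * x ^ 2)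
            - 3 / (h₂ ^ ((2 : ℝ) / 3) * x ^ ((4 : ℝ) / 3) * y ^ ((2 : ℝ) / 3)))) ∧
    (deriv (fun t : ℝ => deriv (fun s : ℝ => fPhase η h₁ h₂ s t) x) y
        = -(1 / 12) *
          (-η * (y / (h₁ * x)) ^ ((1 : ℝ) / 3)
            + η * (x / (h₂ * y)) ^ ((1 : ℝ) / 3)) ^ (-(1 : ℝ) / 2) *
          (3 / (h₁ ^ 2 * x ^ 5 * y) ^ ((1 : ℝ) / 3)
            + 3 / (h₂ ^ 2 * x * y ^ 5) ^ ((1 : ℝ) / 3)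
            - 2 / ((h₁ * h₂) ^ ((1 : ℝ) / 3) * x * y))) ∧
    (deriv (fun t : ℝ => iteratedDeriv 2 (fun s : ℝ => fPhase η h₁ h₂ s t) x) y
        = η / 72 *
          (-η * (y / (h₁ * x)) ^ ((1 : ℝ) / 3)
            + η * (x / (h₂ * y)) ^ ((1 : ℝ) / 3)) ^ (-(3 : ℝ) / 2) *
          (9 / (h₂ * x * y ^ 2)
            + 43 / (h₁ ^ ((2 : ℝ) / 3) * h₂ ^ ((1 : ℝ) / 3) * x ^ ((7 : ℝ) / 3) * y ^ ((2 : ℝ) / 3))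
            - 17 / (h₁ ^ ((1 : ℝ) / 3) * h₂ ^ ((2 : ℝ) / 3) * x ^ ((5 : ℝ) / 3) * y ^ ((4 : ℝ) / 3))
            - 27 / (h₁ * x ^ 3))) := by
  have hb' : 0 < bb η h₁ h₂ x y := hb
  refine ⟨?_, ?_, ?_, ?_⟩
  · exact (hasDerivAt_f hh₁ hh₂ hy hx hb').deriv
  · exact iterated2_eq hη hh₁ hh₂ hy hx hb'
  · have hev : (fun t' : ℝ => deriv (fun s' : ℝ => fPhase η h₁ h₂ s' t') x)
        =ᶠ[nhds y] (fun t' => η/2 * (bb η h₁ h₂ x t') ^ ((1:ℝ)/2)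
          * ((t'/(h₁*x^4)) ^ ((1:ℝ)/3) + (h₂*x^2*t') ^ (-(1:ℝ)/3))) := by
      filter_upwards [ev_t hh₁ hh₂ hx hy hb'] with t' h
      exact (hasDerivAt_f hh₁ hh₂ h.1 hx h.2).deriv
    rw [hev.deriv_eq]
    exact (hasDerivAt_G1_t hη hh₁ hh₂ hx hy hb').deriv
  · have hev : (fun t' : ℝ => iteratedDeriv 2 (fun s' : ℝ => fPhase η h₁ h₂ s' t') x)
        =ᶠ[nhds y] (fun t' => 1/12 * (bb η h₁ h₂ x t') ^ (-(1:ℝ)/2) *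
          (9 * t' ^ ((2:ℝ)/3) / (h₁ ^ ((2:ℝ)/3) * x ^ ((8:ℝ)/3))
            - 2 / ((h₁*h₂) ^ ((1:ℝ)/3) * x ^ 2)
            - 3 / (h₂ ^ ((2:ℝ)/3) * x ^ ((4:ℝ)/3) * t' ^ ((2:ℝ)/3)))) := by
      filter_upwards [ev_t hh₁ hh₂ hx hy hb'] with t' h
      exact iterated2_eq hη hh₁ hh₂ h.1 hx h.2
    rw [hev.deriv_eq]
    exact (hasDerivAt_G2_t hη hh₁ hh₂ hx hy hb').deriv
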